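/- Let q be a power of an odd prime and let x ∈ F_q^× with x^4 ≠ 1. The centralizer in PSL(2,F_q) of the image of the matrix diag(x, x^{-1}) ∈ SL(2,F_q) is cyclic of order (q-1)/2. -/

import Mathlib

open Matrix Subgroup

private def torusHom (F : Type*) [Field F] : Fˣ →* Matrix.SpecialLinearGroup (Fin 2) F where
  toFun a := ⟨!![(a:F), 0; 0, ((a⁻¹ : Fˣ):F)], by simp [Matrix.det_fin_two_of]⟩
  map_one' := by ext i j; fin_cases i <;> fin_cases j <;> simp
  map_mul' a b := by
    ext i j
    erw [Matrix.SpecialLinearGroup.coe_mul]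
    fin_cases i <;> fin_cases j <;> simp [Matrix.mul_fin_two, mul_comm]

private lemma torusHom_coe' {F : Type*} [Field F] (a : Fˣ) :
    ((torusHom F a : Matrix.SpecialLinearGroup (Fin 2) F) : Matrix (Fin 2) (Fin 2) F) =
      !![(a:F), 0; 0, ((a⁻¹ : Fˣ):F)] := rfl

theorem centralizer_image_split_torus_cyclic {F : Type*} [Field F] [Fintype F]
    (hq : Odd (Fintype.card F)) (x : Fˣ) (hx : x ^ 4 ≠ 1)
    (g : Matrix.SpecialLinearGroup (Fin 2) F)
    (hg : (g : Matrix (Fin 2) (Fin 2) F) = !![(x : F), 0; 0, ((x⁻¹ : Fˣ) : F)]) :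
    IsCyclic
      (Subgroup.centralizer
        {(QuotientGroup.mk g :
          Matrix.SpecialLinearGroup (Fin 2) F ⧸
            Subgroup.center (Matrix.SpecialLinearGroup (Fin 2) F))}) ∧
    Nat.card
        (Subgroup.centralizer
          {(QuotientGroup.mk g :
            Matrix.SpecialLinearGroup (Fin 2) F ⧸
              Subgroup.center (Matrix.SpecialLinearGroup (Fin 2) F))}) =
      (Fintype.card F - 1) / 2 := by
  -- field facts
  have hchar : ringChar F ≠ 2 := by
    intro h
    have := FiniteField.even_card_of_char_two h
    rw [Nat.odd_iff] at hq
    omega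
  have h2 : (2:F) ≠ 0 := Ring.two_ne_zero hchar
  have hx4 : (x:F)^4 ≠ 1 := by
    intro h
    exact hx (Units.ext (by push_cast; exact h))
  have hx2 : (x:F)^2 ≠ 1 := by
    intro h
    apply hx4
    have : ((x:F)^2)^2 = 1 := by rw [h]; ring
    linear_combination this
  have hxinv : ((x⁻¹:Fˣ):F) = (x:F)⁻¹ := by simp
  have hx0 : (x:F) ≠ 0 := Units.ne_zero x
  have hinv1 : (x:F) * ((x⁻¹:Fˣ):F) = 1 := by rw [hxinv]; field_simp
  have hxne : ((x⁻¹:Fˣ):F) ≠ (x:F) := by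
    intro h
    apply hx2
    rw [h] at hinv1
    rw [sq]; exact hinv1
  have hxsum : ((x⁻¹:Fˣ):F) + (x:F) ≠ 0 := by
    intro h
    apply hx4
    have e1 : ((x⁻¹:Fˣ):F) = -(x:F) := eq_neg_of_add_eq_zero_left h
    rw [e1] at hinv1
    have e2 : (x:F)^2 = -1 := by linear_combination -hinv1
    linear_combination ((x:F)^2 - 1) * e2
  have hcent : Subgroup.centralizer {(QuotientGroup.mk g :
      Matrix.SpecialLinearGroup (Fin 2) F ⧸
        Subgroup.center (Matrix.SpecialLinearGroup (Fin 2) F))} =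
      ((QuotientGroup.mk' (Subgroup.center (Matrix.SpecialLinearGroup (Fin 2) F))).comp
        (torusHom F)).range := by
    ext k
    rw [Subgroup.mem_centralizer_singleton_iff]
    constructor
    · intro hk
      obtain ⟨h, rfl⟩ := QuotientGroup.mk'_surjective
        (Subgroup.center (Matrix.SpecialLinearGroup (Fin 2) F)) k
      rw [QuotientGroup.mk'_apply] at hk ⊢
      rw [← QuotientGroup.mk_mul, ← QuotientGroup.mk_mul, QuotientGroup.eq] at hk
      obtain ⟨r, hr2, hr⟩ := Matrix.SpecialLinearGroup.mem_center_iff.mp hk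
      rw [Fintype.card_fin] at hr2
      have hs : (Matrix.scalar (Fin 2)) r = !![r,0;0,r] := by
        ext i j; fin_cases i <;> fin_cases j <;> simp [Matrix.scalar_apply]
      have key : (g : Matrix (Fin 2) (Fin 2) F) * (h : Matrix (Fin 2) (Fin 2) F) =
          (h : Matrix (Fin 2) (Fin 2) F) * (g : Matrix (Fin 2) (Fin 2) F) *
            (Matrix.scalar (Fin 2)) r := by
        rw [hr, ← Matrix.SpecialLinearGroup.coe_mul, ← Matrix.SpecialLinearGroup.coe_mul,
          ← Matrix.SpecialLinearGroup.coe_mul]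
        congr 1
        group
        rfl
      have hhm := Matrix.eta_fin_two (h : Matrix (Fin 2) (Fin 2) F)
      set a := (h : Matrix (Fin 2) (Fin 2) F) 0 0 with ha'
      set b := (h : Matrix (Fin 2) (Fin 2) F) 0 1 with hb'
      set c := (h : Matrix (Fin 2) (Fin 2) F) 1 0 with hc'
      set d := (h : Matrix (Fin 2) (Fin 2) F) 1 1 with hd'
      have hdet : a * d - b * c = 1 := by
        have := h.2
        rw [Matrix.det_fin_two] at this
        exact this
      rw [hhm, hg, hs, Matrix.mul_fin_two, Matrix.mul_fin_two, Matrix.mul_fin_two,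
        ← Matrix.ext_iff] at key
      simp only [Fin.forall_fin_two, Matrix.cons_val_zero, Matrix.cons_val_one,
        Matrix.head_cons, Matrix.head_fin_const, Matrix.of_apply, Matrix.cons_val'] at key
      obtain ⟨⟨e00, e01⟩, e10, e11⟩ := key
      have hr2' : r * r = 1 := by rw [← sq]; exact hr2
      rcases mul_self_eq_one_iff.mp hr2' with r1 | rneg
      · subst r1
        have hb0 : b = 0 := by
          have hb1 : b * (((x⁻¹:Fˣ):F) - (x:F)) = 0 := by linear_combination -e01
          rcases mul_eq_zero.mp hb1 with h' | h'
          · exact h'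
          · exact absurd (sub_eq_zero.mp h') hxne
        have hc0 : c = 0 := by
          have hc1 : c * ((x:F) - ((x⁻¹:Fˣ):F)) = 0 := by linear_combination -e10
          rcases mul_eq_zero.mp hc1 with h' | h'
          · exact h'
          · exact absurd (sub_eq_zero.mp h').symm hxne
        have had : a * d = 1 := by rw [hb0, hc0] at hdet; linear_combination hdet
        refine ⟨Units.mk a d had (by rw [mul_comm]; exact had), ?_⟩
        have hth : torusHom F (Units.mk a d had (by rw [mul_comm]; exact had)) = h := by
          ext i j
          rw [torusHom_coe']
          fin_cases i <;> fin_cases j <;>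
            simp [torusHom, hhm, hb0, hc0, ← ha', ← hb', ← hc', ← hd', Units.inv_mk]
        simp only [MonoidHom.comp_apply, QuotientGroup.mk'_apply, hth]
      · subst rneg
        have hxinv0 : ((x⁻¹:Fˣ):F) ≠ 0 := Units.ne_zero _
        have ha0 : a = 0 := by
          have : a * ((2:F) * (x:F)) = 0 := by linear_combination e00
          rcases mul_eq_zero.mp this with h' | h'
          · exact h'
          · exact absurd h' (mul_ne_zero h2 hx0)
        have hd0 : d = 0 := by
          have : d * ((2:F) * ((x⁻¹:Fˣ):F)) = 0 := by linear_combination e11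
          rcases mul_eq_zero.mp this with h' | h'
          · exact h'
          · exact absurd h' (mul_ne_zero h2 hxinv0)
        have hb0 : b = 0 := by
          have : b * (((x⁻¹:Fˣ):F) + (x:F)) = 0 := by linear_combination e01
          rcases mul_eq_zero.mp this with h' | h'
          · exact h'
          · exact absurd h' hxsum
        rw [ha0, hb0, hd0] at hdet
        simp at hdet
    · rintro ⟨a, rfl⟩
      have hcomm : g * torusHom F a = torusHom F a * g := by
        ext i j
        erw [Matrix.SpecialLinearGroup.coe_mul, Matrix.SpecialLinearGroup.coe_mul]
        rw [torusHom_coe']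
        fin_cases i <;> fin_cases j <;>
          simp [torusHom, hg, Matrix.SpecialLinearGroup.coe_mul, Matrix.mul_fin_two, mul_comm]
      show _ = _
      simp only [MonoidHom.comp_apply, QuotientGroup.mk'_apply, ← QuotientGroup.mk_mul, hcomm]
  set psi := (QuotientGroup.mk' (Subgroup.center (Matrix.SpecialLinearGroup (Fin 2) F))).comp
    (torusHom F) with hpsidef
  rw [hcent]
  constructor
  · exact isCyclic_of_surjective psi.rangeRestrict psi.rangeRestrict_surjective
  · have hne : (1 : Fˣ) ≠ -1 := by
      intro h
      apply Ring.neg_one_ne_one_of_char_ne_two hchar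
      have := congrArg (Units.val) h
      simpa using this.symm
    have hker : (psi.ker : Set Fˣ) = {1, -1} := by
      ext a
      simp only [SetLike.mem_coe, MonoidHom.mem_ker, hpsidef, MonoidHom.comp_apply,
        QuotientGroup.mk'_apply, QuotientGroup.eq_one_iff, Set.mem_insert_iff,
        Set.mem_singleton_iff]
      constructor
      · intro hmem
        obtain ⟨r, hr2, hr⟩ := Matrix.SpecialLinearGroup.mem_center_iff.mp hmem
        have h00 := congrFun (congrFun hr 0) 0
        have h11 := congrFun (congrFun hr 1) 1
        simp [torusHom, Matrix.scalar_apply] at h00 h11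
        have haa : (a : F) = ((a:F))⁻¹ := h00.symm.trans h11
        have : (a : F) * (a : F) = 1 := by
          nth_rewrite 2 [haa]
          exact mul_inv_cancel₀ (Units.ne_zero a)
        rcases mul_self_eq_one_iff.mp this with h' | h'
        · left; exact Units.ext (by simpa using h')
        · right; exact Units.ext (by simpa using h')
      · rintro (rfl | rfl)
        · simpa using (Subgroup.center (Matrix.SpecialLinearGroup (Fin 2) F)).one_mem
        · apply Matrix.SpecialLinearGroup.mem_center_iff.mpr
          refine ⟨-1, by simp, ?_⟩
          ext i j
          rw [torusHom_coe']
          fin_cases i <;> fin_cases j <;>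
            simp [torusHom, Matrix.scalar_apply, inv_neg_one]
    have hkercard : Nat.card psi.ker = 2 := by
      have h' : Nat.card psi.ker = Nat.card ({1, -1} : Set Fˣ) := by
        rw [← hker]; rfl
      rw [h', Nat.card_coe_set_eq, Set.ncard_pair hne]
    have hq1 : Nat.card Fˣ = Fintype.card F - 1 := by
      classical
      rw [Nat.card_eq_fintype_card, Fintype.card_units]
    have hquot : Nat.card (Fˣ ⧸ psi.ker) = Nat.card psi.range :=
      Nat.card_congr (QuotientGroup.quotientKerEquivRange psi).toEquiv
    have htot := Subgroup.card_eq_card_quotient_mul_card_subgroup psi.ker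
    rw [hquot, hkercard, hq1] at htot
    have hcard2 : 2 ≤ Fintype.card F := by
      have := Fintype.one_lt_card (α := F)
      omega
    omega
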